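/- Let d ≥ 1, Z ≥ 2 be integers and let U ∈ ℝ^d with coordinates U_1,…,U_d. Let U_min = min_m U_m, U_max = max_m U_m, and define Z uniformly spaced centroids r_z = U_min + (z−1)(U_max − U_min)/(Z−1) for z = 1,…,Z. For each coordinate m, let z(m) ∈ {1,…,Z−1} be any index with r_{z(m)} ≤ U_m ≤ r_{z(m)+1}. Then Σ_{m=1}^{d} ( r_{z(m)+1} − U_m )( U_m − r_{z(m)} ) ≤ ( d / (2(Z−1)²) ) · ‖U‖², where ‖U‖² = Σ_m U_m². -/
import Mathlib


/-- Bound on the total expected squared error of MUCSC stochastic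
quantization with `Z` uniformly spaced centroids: for `U ∈ ℝ^d` with coordinates
`U 1, …, U d`, centroids `r z = U_min + (z−1)(U_max − U_min)/(Z−1)`, and any choice of
indices `z(m) ∈ {1,…,Z−1}` with `r (z m) ≤ U m ≤ r (z m + 1)`, one has
`Σ_m (r (z m + 1) − U m)(U m − r (z m)) ≤ (d / (2(Z−1)²)) ‖U‖²`. -/
theorem mucsc_uniform_centroid_error_bound
    (d Z : ℕ) (hd : 1 ≤ d) (hZ : 2 ≤ Z)
    (U : Fin d → ℝ) (Umin Umax : ℝ)
    (hUmin : IsLeast (Set.range U) Umin) (hUmax : IsGreatest (Set.range U) Umax)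
    (r : ℕ → ℝ)
    (hr : ∀ z : ℕ, r z = Umin + ((z : ℝ) - 1) * (Umax - Umin) / ((Z : ℝ) - 1))
    (zm : Fin d → ℕ)
    (hz1 : ∀ m, 1 ≤ zm m) (hz2 : ∀ m, zm m ≤ Z - 1)
    (hlo : ∀ m, r (zm m) ≤ U m) (hhi : ∀ m, U m ≤ r (zm m + 1)) :
    ∑ m, (r (zm m + 1) - U m) * (U m - r (zm m)) ≤
      (d : ℝ) / (2 * ((Z : ℝ) - 1) ^ 2) * ∑ m, (U m) ^ 2 := by
  have hZ1 : (1:ℝ) ≤ (Z:ℝ) - 1 := by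
    have : (2:ℝ) ≤ (Z:ℝ) := by exact_mod_cast hZ
    linarith
  have hZpos : (0:ℝ) < (Z:ℝ) - 1 := by linarith
  set c : ℝ := (Umax - Umin) / ((Z:ℝ) - 1) with hc
  -- spacing
  have hgap : ∀ m : Fin d, r (zm m + 1) - r (zm m) = c := by
    intro m
    rw [hr, hr, hc]
    push_cast
    ring
  -- sum of squares nonneg
  have hsumsq : ∀ s : Finset (Fin d), (0:ℝ) ≤ ∑ m ∈ s, (U m)^2 :=
    fun s => Finset.sum_nonneg fun m _ => sq_nonneg _
  -- key: (Umax - Umin)^2 ≤ 2 * ∑ U m ^ 2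
  have hkey : (Umax - Umin)^2 ≤ 2 * ∑ m, (U m)^2 := by
    obtain ⟨⟨m0, hm0⟩, -⟩ := hUmin
    obtain ⟨⟨m1, hm1⟩, -⟩ := hUmax
    by_cases h : m0 = m1
    · have : Umin = Umax := by rw [← hm0, ← hm1, h]
      rw [this]
      simpa using hsumsq Finset.univ
    · have hsub : ({m0, m1} : Finset (Fin d)) ⊆ Finset.univ := Finset.subset_univ _
      have h2 : (U m0)^2 + (U m1)^2 ≤ ∑ m, (U m)^2 := by
        have := Finset.sum_le_sum_of_subset_of_nonneg hsub
          (fun m _ _ => sq_nonneg (U m))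
        rwa [Finset.sum_pair h] at this
      rw [hm0] at *
      rw [hm1] at *
      nlinarith [sq_nonneg (Umax + Umin)]
  -- per-term bound
  have hterm : ∀ m : Fin d, (r (zm m + 1) - U m) * (U m - r (zm m)) ≤ c^2 / 4 := by
    intro m
    have h1 := hlo m
    have h2 := hhi m
    have h3 := hgap m
    nlinarith [sq_nonneg (r (zm m + 1) + r (zm m) - 2 * U m)]
  calc ∑ m, (r (zm m + 1) - U m) * (U m - r (zm m))
      ≤ ∑ _m : Fin d, c^2 / 4 := Finset.sum_le_sum fun m _ => hterm m
    _ = (d:ℝ) * (c^2 / 4) := by simp [Finset.sum_const]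
    _ ≤ (d : ℝ) / (2 * ((Z : ℝ) - 1) ^ 2) * ∑ m, (U m) ^ 2 := by
        have hne : ((Z:ℝ) - 1) ≠ 0 := ne_of_gt hZpos
        have heq : (d : ℝ) / (2 * ((Z : ℝ) - 1) ^ 2) * ∑ m, (U m) ^ 2 - (d:ℝ) * (c^2/4)
            = (d:ℝ) / (4 * ((Z:ℝ)-1)^2) * (2 * ∑ m, (U m)^2 - (Umax-Umin)^2) := by
          rw [hc]; field_simp; ring
        have hnn : (0:ℝ) ≤ (d:ℝ) / (4 * ((Z:ℝ)-1)^2) * (2 * ∑ m, (U m)^2 - (Umax-Umin)^2) :=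
          mul_nonneg (by positivity) (by linarith)
        linarith
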